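/- Let m ≥ 5 and let r ≥ 0 be an integer such that every point of ℤ^{2^{m−1}} is at Manhattan distance at most r from some point of Λ(m−1, m−1). Then every point of ℤ^{2ᵐ} is at Manhattan distance at most 3r + 2^{m−1} from some point of Λ(m, m). (In terms of covering radii: r(m, m) ≤ 3·r(m−1, m−1) + 2^{m−1}.) -/

import Mathlib

/-- `Hmat m` : the `2^m × 2^m` matrix defined by `H₀ = [1]` and
`H_{m+1} = [[Hₘ, Hₘ], [0, Hₘ]]` in block form. -/
def Hmat : (m : ℕ) → Matrix (Fin (2 ^ m)) (Fin (2 ^ m)) ℤ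
  | 0 => Matrix.of fun _ _ => 1
  | m + 1 =>
      Matrix.reindex
        (finSumFinEquiv.trans (finCongr (by rw [pow_succ, mul_two] :
          2 ^ m + 2 ^ m = 2 ^ (m + 1))))
        (finSumFinEquiv.trans (finCongr (by rw [pow_succ, mul_two] :
          2 ^ m + 2 ^ m = 2 ^ (m + 1))))
        (Matrix.fromBlocks (Hmat m) (Hmat m) 0 (Hmat m))

/-- `Smat m` : the `2^m × 2^m` Sylvester Hadamard matrix, `𝓗₀ = [1]`,
`𝓗_{m+1} = [[𝓗ₘ, 𝓗ₘ], [𝓗ₘ, −𝓗ₘ]]`. -/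
def Smat : (m : ℕ) → Matrix (Fin (2 ^ m)) (Fin (2 ^ m)) ℤ
  | 0 => Matrix.of fun _ _ => 1
  | m + 1 =>
      Matrix.reindex
        (finSumFinEquiv.trans (finCongr (by rw [pow_succ, mul_two] :
          2 ^ m + 2 ^ m = 2 ^ (m + 1))))
        (finSumFinEquiv.trans (finCongr (by rw [pow_succ, mul_two] :
          2 ^ m + 2 ^ m = 2 ^ (m + 1))))
        (Matrix.fromBlocks (Smat m) (Smat m) (Smat m) (-(Smat m)))

/-- Hamming weight of the `s`-th row of `Hmat m`. -/
def rowWeight (m : ℕ) (s : Fin (2 ^ m)) : ℕ :=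
  (Finset.univ.filter (fun t => Hmat m s t ≠ 0)).card

/-- `Gmat m j` : the matrix whose `s`-th row is the `s`-th row of `Hmat m`
multiplied by `2^(j − ℓ)` (truncated subtraction) where `2^ℓ` is the Hamming
weight of that row. -/
def Gmat (m j : ℕ) : Matrix (Fin (2 ^ m)) (Fin (2 ^ m)) ℤ :=
  Matrix.of fun s t => (2 : ℤ) ^ (j - Nat.log 2 (rowWeight m s)) * Hmat m s t

/-- The lattice generated by the rows of `G`. -/
def latticeOf {n : ℕ} (G : Matrix (Fin n) (Fin n) ℤ) : Set (Fin n → ℤ) :=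
  { x | ∃ u : Fin n → ℤ, x = Matrix.vecMul u G }

def emap (m : ℕ) : Fin (2 ^ m) ⊕ Fin (2 ^ m) ≃ Fin (2 ^ (m + 1)) :=
  finSumFinEquiv.trans (finCongr (by rw [pow_succ, mul_two]))

lemma Hmat_succ (m : ℕ) (a b : Fin (2 ^ m) ⊕ Fin (2 ^ m)) :
    Hmat (m + 1) (emap m a) (emap m b) =
      Matrix.fromBlocks (Hmat m) (Hmat m) 0 (Hmat m) a b := by
  simp [Hmat, emap, Matrix.reindex_apply]

lemma Hmat_diag (m : ℕ) (s : Fin (2 ^ m)) : Hmat m s s = 1 := by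
  induction m with
  | zero => simp [Hmat]
  | succ n ih =>
    obtain ⟨a, rfl⟩ := (emap n).surjective s
    cases a <;> rw [Hmat_succ] <;> simp [ih]

lemma rowWeight_pos (m : ℕ) (s : Fin (2 ^ m)) : 0 < rowWeight m s := by
  apply Finset.card_pos.2
  exact ⟨s, by simp [Hmat_diag]⟩

lemma rowWeight_le (m : ℕ) (s : Fin (2 ^ m)) : rowWeight m s ≤ 2 ^ m := by
  simpa [rowWeight] using Finset.card_filter_le Finset.univ (fun t => Hmat m s t ≠ 0)

lemma log_rowWeight_le (m : ℕ) (s : Fin (2 ^ m)) : Nat.log 2 (rowWeight m s) ≤ m := by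
  calc Nat.log 2 (rowWeight m s) ≤ Nat.log 2 (2 ^ m) :=
        Nat.log_mono_right (rowWeight_le m s)
    _ = m := Nat.log_pow one_lt_two m

lemma rowWeight_inl (m : ℕ) (s : Fin (2 ^ m)) :
    rowWeight (m + 1) (emap m (.inl s)) = 2 * rowWeight m s := by
  unfold rowWeight
  rw [Finset.card_filter, Finset.card_filter, ← Equiv.sum_comp (emap m),
    Fintype.sum_sum_type]
  simp [Hmat_succ, two_mul]

lemma rowWeight_inr (m : ℕ) (s : Fin (2 ^ m)) :
    rowWeight (m + 1) (emap m (.inr s)) = rowWeight m s := by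
  unfold rowWeight
  rw [Finset.card_filter, Finset.card_filter, ← Equiv.sum_comp (emap m),
    Fintype.sum_sum_type]
  simp [Hmat_succ]

lemma Gmat_succ (m : ℕ) (a b : Fin (2 ^ m) ⊕ Fin (2 ^ m)) :
    Gmat (m + 1) (m + 1) (emap m a) (emap m b) =
      Matrix.fromBlocks (Gmat m m) (Gmat m m) 0 (Matrix.of fun s t => 2 * Gmat m m s t) a b := by
  have hlog := log_rowWeight_le m
  cases a with
  | inl s =>
    have hw : Nat.log 2 (rowWeight (m + 1) (emap m (.inl s))) =
        Nat.log 2 (rowWeight m s) + 1 := by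
      rw [rowWeight_inl, two_mul, ← two_mul, mul_comm]
      exact Nat.log_mul_base one_lt_two (rowWeight_pos m s).ne'
    cases b <;>
      simp [Gmat, Hmat_succ, hw, Nat.succ_sub_succ]
  | inr s =>
    have hw : Nat.log 2 (rowWeight (m + 1) (emap m (.inr s))) =
        Nat.log 2 (rowWeight m s) := by rw [rowWeight_inr]
    have hexp : (m + 1) - Nat.log 2 (rowWeight m s) =
        (m - Nat.log 2 (rowWeight m s)) + 1 := by
      have := hlog s; omega
    cases b <;>
      simp [Gmat, Hmat_succ, hw, hexp, pow_succ, mul_comm, mul_assoc, mul_left_comm]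

lemma vecMul_pair (m : ℕ) (u v : Fin (2 ^ m) → ℤ) (t : Fin (2 ^ m)) :
    Matrix.vecMul (fun i => Sum.elim u v ((emap m).symm i)) (Gmat (m + 1) (m + 1))
        (emap m (.inl t)) = Matrix.vecMul u (Gmat m m) t ∧
    Matrix.vecMul (fun i => Sum.elim u v ((emap m).symm i)) (Gmat (m + 1) (m + 1))
        (emap m (.inr t)) = Matrix.vecMul u (Gmat m m) t
          + 2 * Matrix.vecMul v (Gmat m m) t := by
  constructor <;>
  · rw [Matrix.vecMul, dotProduct, ← Equiv.sum_comp (emap m),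
      Fintype.sum_sum_type]
    simp [Gmat_succ, Matrix.vecMul, dotProduct, Finset.mul_sum,
      Finset.sum_add_distrib, mul_comm, mul_assoc, mul_left_comm]

/-- Covering-radius recursion for `Λ(m, m)`: if every point of `ℤ^{2^{m−1}}` is at
Manhattan distance at most `r` from `Λ(m−1, m−1)`, then every point of `ℤ^{2^m}`
is at Manhattan distance at most `3r + 2^{m−1}` from `Λ(m, m)`. -/
theorem covering_radius_Gmm_recursion (m : ℕ) (hm : 5 ≤ m) (r : ℕ)
    (hr : ∀ x : Fin (2 ^ (m - 1)) → ℤ,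
      ∃ c ∈ latticeOf (Gmat (m - 1) (m - 1)), (∑ i, |x i - c i|) ≤ (r : ℤ)) :
    ∀ x : Fin (2 ^ m) → ℤ,
      ∃ c ∈ latticeOf (Gmat m m), (∑ i, |x i - c i|) ≤ 3 * (r : ℤ) + 2 ^ (m - 1) := by
  obtain ⟨n, rfl⟩ : ∃ n, m = n + 1 := ⟨m - 1, by omega⟩
  simp only [Nat.add_sub_cancel] at hr ⊢
  intro x
  obtain ⟨a, ⟨u, hu⟩, ha⟩ := hr (fun t => x (emap n (.inl t)))
  subst hu
  set y : Fin (2 ^ n) → ℤ :=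
    fun t => x (emap n (.inr t)) - Matrix.vecMul u (Gmat n n) t with hy
  obtain ⟨b, ⟨v, hv⟩, hb⟩ := hr (fun t => y t / 2)
  subst hv
  refine ⟨Matrix.vecMul (fun i => Sum.elim u v ((emap n).symm i))
      (Gmat (n + 1) (n + 1)), ⟨_, rfl⟩, ?_⟩
  rw [← Equiv.sum_comp (emap n), Fintype.sum_sum_type]
  have h1 : ∀ t : Fin (2 ^ n),
      |x (emap n (.inl t)) - Matrix.vecMul (fun i => Sum.elim u v ((emap n).symm i))
        (Gmat (n + 1) (n + 1)) (emap n (.inl t))|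
      = |x (emap n (.inl t)) - Matrix.vecMul u (Gmat n n) t| := by
    intro t; rw [(vecMul_pair n u v t).1]
  have h2 : ∀ t : Fin (2 ^ n),
      |x (emap n (.inr t)) - Matrix.vecMul (fun i => Sum.elim u v ((emap n).symm i))
        (Gmat (n + 1) (n + 1)) (emap n (.inr t))|
      ≤ 2 * |y t / 2 - Matrix.vecMul v (Gmat n n) t| + 1 := by
    intro t
    rw [(vecMul_pair n u v t).2]
    have hq : x (emap n (.inr t)) = Matrix.vecMul u (Gmat n n) t + (2 * (y t / 2) + y t % 2) := by
      have := Int.mul_ediv_add_emod (y t) 2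
      simp only [hy]; omega
    have hp : y t % 2 = 0 ∨ y t % 2 = 1 := Int.emod_two_eq_zero_or_one (y t)
    rw [hq]
    have : Matrix.vecMul u (Gmat n n) t + (2 * (y t / 2) + y t % 2) -
        (Matrix.vecMul u (Gmat n n) t + 2 * Matrix.vecMul v (Gmat n n) t)
        = 2 * (y t / 2 - Matrix.vecMul v (Gmat n n) t) + y t % 2 := by ring
    rw [this]
    calc |2 * (y t / 2 - Matrix.vecMul v (Gmat n n) t) + y t % 2|
        ≤ |2 * (y t / 2 - Matrix.vecMul v (Gmat n n) t)| + |y t % 2| := abs_add_le _ _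
      _ ≤ 2 * |y t / 2 - Matrix.vecMul v (Gmat n n) t| + 1 := by
          rw [abs_mul]
          rcases hp with h | h <;> simp [h]
  calc (∑ t, |x (emap n (.inl t)) - Matrix.vecMul (fun i => Sum.elim u v ((emap n).symm i))
          (Gmat (n + 1) (n + 1)) (emap n (.inl t))|)
        + ∑ t, |x (emap n (.inr t)) - Matrix.vecMul (fun i => Sum.elim u v ((emap n).symm i))
          (Gmat (n + 1) (n + 1)) (emap n (.inr t))|
      ≤ (∑ t, |x (emap n (.inl t)) - Matrix.vecMul u (Gmat n n) t|)
        + ∑ t, (2 * |y t / 2 - Matrix.vecMul v (Gmat n n) t| + 1) := by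
        exact add_le_add (Finset.sum_le_sum fun t _ => (h1 t).le)
          (Finset.sum_le_sum fun t _ => h2 t)
    _ = (∑ t, |x (emap n (.inl t)) - Matrix.vecMul u (Gmat n n) t|)
        + (2 * (∑ t, |y t / 2 - Matrix.vecMul v (Gmat n n) t|) + 2 ^ n) := by
        rw [Finset.sum_add_distrib, ← Finset.mul_sum]
        simp [Finset.card_univ]
    _ ≤ (r : ℤ) + (2 * (r : ℤ) + 2 ^ n) :=
        add_le_add ha (add_le_add
          (mul_le_mul_of_nonneg_left hb (by norm_num)) le_rfl)
    _ = 3 * (r : ℤ) + 2 ^ n := by ring
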